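/- Define r₃ : ℂ × ℂ² → ℝ by r₃(w,z₁,z₂) := Im(w) − z₁·conj(z₂) − z₂·conj(z₁) − |z₁|⁴, and for β ∈ ℝ define the linear map Λ_β : ℂ³ → ℂ³ by Λ_β(w,z₁,z₂) := (e^{4β}w, e^{β}z₁, e^{3β}z₂). Then for all β ∈ ℝ and all (w,z₁,z₂) ∈ ℂ³, r₃(Λ_β(w,z₁,z₂)) = e^{4β}·r₃(w,z₁,z₂); in particular each Λ_β fixes the origin and maps the hypersurface M₃ := r₃⁻¹(0) onto itself, and for β ≠ 0 it is a non-isometric homothety of the contact form (scaling it by e^{4β} ≠ 1). -/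

import Mathlib

open ComplexConjugate

/-- `r₃(w,z₁,z₂) = Im w − z₁ conj z₂ − z₂ conj z₁ − |z₁|⁴` on `ℂ³`. -/
noncomputable def r3 : ℂ × ℂ × ℂ → ℝ := fun p =>
  p.1.im - (p.2.1 * conj p.2.2 + p.2.2 * conj p.2.1).re - ‖p.2.1‖ ^ 4

/-- `M₃ = r₃⁻¹(0)`. -/
noncomputable def M3 : Set (ℂ × ℂ × ℂ) := r3 ⁻¹' {0}

/-- `Λ_β(w,z₁,z₂) = (e^{4β}w, e^{β}z₁, e^{3β}z₂)`. -/
noncomputable def Λdef (β : ℝ) : ℂ × ℂ × ℂ → ℂ × ℂ × ℂ := fun p =>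
  ((Real.exp (4 * β) : ℂ) * p.1, (Real.exp β : ℂ) * p.2.1, (Real.exp (3 * β) : ℂ) * p.2.2)

lemma r3_key (β : ℝ) (p : ℂ × ℂ × ℂ) : r3 (Λdef β p) = Real.exp (4 * β) * r3 p := by
  obtain ⟨w, z₁, z₂⟩ := p
  have habs : ‖(Real.exp β : ℂ) * z₁‖ = Real.exp β * ‖z₁‖ := by
    rw [norm_mul, Complex.norm_of_nonneg (Real.exp_pos β).le]
  have h2 : Real.exp β ^ 4 = Real.exp (4 * β) := by
    rw [← Real.exp_nat_mul]; norm_num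
  have h1 : Real.exp β * Real.exp (3 * β) = Real.exp (4 * β) := by
    rw [← Real.exp_add]; ring_nf
  have hc : ((Real.exp β : ℂ)) * ((Real.exp (3 * β) : ℂ)) = (Real.exp (4 * β) : ℂ) := by
    rw [← Complex.ofReal_mul, h1]
  simp only [r3, Λdef, habs, map_mul, Complex.conj_ofReal, mul_pow, h2]
  rw [show (Real.exp β : ℂ) * z₁ * ((Real.exp (3 * β) : ℂ) * conj z₂) +
      (Real.exp (3 * β) : ℂ) * z₂ * ((Real.exp β : ℂ) * conj z₁) =
      ((Real.exp (4 * β) : ℝ) : ℂ) * (z₁ * conj z₂ + z₂ * conj z₁) from by rw [← hc]; ring]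
  rw [Complex.re_ofReal_mul]
  rw [Complex.im_ofReal_mul]
  ring

lemma Λ_inv (β : ℝ) (p : ℂ × ℂ × ℂ) : Λdef β (Λdef (-β) p) = p := by
  obtain ⟨w, z₁, z₂⟩ := p
  have h : ∀ c : ℝ, (Real.exp c : ℂ) * ((Real.exp (-c) : ℂ) * z₁) = z₁ → True := fun _ _ => trivial
  simp only [Λdef, Prod.mk.injEq, ← mul_assoc, ← Complex.ofReal_mul, ← Real.exp_add]
  refine ⟨?_, ?_, ?_⟩ <;> · ring_nf; simp

/-- `r₃ ∘ Λ_β = e^{4β} r₃`; in particular `Λ_β` fixes the origin and maps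
`M₃ = r₃⁻¹(0)` onto itself, and for `β ≠ 0` it is a non-isometric homothety,
scaling the contact form by `e^{4β} ≠ 1`. -/
theorem stmt_16 (β : ℝ) :
    (∀ p : ℂ × ℂ × ℂ, r3 (Λdef β p) = Real.exp (4 * β) * r3 p) ∧
    Λdef β 0 = 0 ∧
    Λdef β '' M3 = M3 ∧
    (β ≠ 0 → Real.exp (4 * β) ≠ 1) := by
  refine ⟨r3_key β, ?_, ?_, ?_⟩
  · simp [Λdef]
  · ext p
    constructor
    · rintro ⟨q, hq, rfl⟩
      simp only [M3, Set.mem_preimage, Set.mem_singleton_iff] at hq ⊢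
      rw [r3_key, hq, mul_zero]
    · intro hp
      refine ⟨Λdef (-β) p, ?_, Λ_inv β p⟩
      simp only [M3, Set.mem_preimage, Set.mem_singleton_iff] at hp ⊢
      rw [r3_key, hp, mul_zero]
  · intro hβ h
    rw [Real.exp_eq_one_iff] at h
    simp at h
    exact hβ h
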